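/- The 4×4 matrix d with rows (0,1,1,2), (1,0,2,1), (1,2,0,2), (2,1,2,0) is a metric of strict negative type, its peel distribution is p*(d) = (1,1,2,2)/6 with full support {1,2,3,4}, but the peel of the restriction d|_{{1,2,3}} is {2,3} ≠ {1,2,3}. Hence a subset of a peel need not equal its own peel. -/

import Mathlib

open Matrix BigOperators

set_option maxHeartbeats 1000000

/-- The counterexample metric of strict negative type. -/
def dEx : Matrix (Fin 4) (Fin 4) ℝ :=
  !![0, 1, 1, 2; 1, 0, 2, 1; 1, 2, 0, 2; 2, 1, 2, 0]

/-- Its restriction to the first three points. -/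
def dEx3 : Matrix (Fin 3) (Fin 3) ℝ :=
  dEx.submatrix (Fin.castLE (by norm_num)) (Fin.castLE (by norm_num))

lemma dEx3_eq : dEx3 = !![0, 1, 1; 1, 0, 2; 1, 2, 0] := by
  ext i j; fin_cases i <;> fin_cases j <;> rfl

lemma quad4 (q : Fin 4 → ℝ) : q ⬝ᵥ dEx.mulVec q =
    2*(q 0 * q 1 + q 0 * q 2 + 2*(q 0 * q 3) + 2*(q 1 * q 2) + q 1 * q 3 + 2*(q 2 * q 3)) := by
  simp [dEx, dotProduct, Matrix.mulVec, Fin.sum_univ_four, Matrix.vecHead, Matrix.vecTail]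
  ring

lemma quad3 (q : Fin 3 → ℝ) : q ⬝ᵥ dEx3.mulVec q =
    2*(q 0 * q 1 + q 0 * q 2 + 2*(q 1 * q 2)) := by
  rw [dEx3_eq]
  simp [dotProduct, Matrix.mulVec, Fin.sum_univ_three, Matrix.vecHead, Matrix.vecTail]
  ring

/-- The 4×4 matrix with rows (0,1,1,2), (1,0,2,1), (1,2,0,2), (2,1,2,0) is a metric of
strict negative type; its peel distribution is `(1,1,2,2)/6`, with full support; but the
peel of the restriction to the first three points is `{2,3} ≠ {1,2,3}`: every maximizer of
the restricted quadratic form over the simplex vanishes at the first point and is nonzero at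
the other two. Hence a subset of a peel need not equal its own peel. -/
theorem stmt13 :
    dEx.IsSymm ∧ (∀ i, dEx i i = 0) ∧ (∀ i j, i ≠ j → 0 < dEx i j) ∧
    (∀ i j k, dEx i k ≤ dEx i j + dEx j k) ∧
    (∀ x : Fin 4 → ℝ, x ≠ 0 → ∑ i, x i = 0 → x ⬝ᵥ dEx.mulVec x < 0) ∧
    (![1/6, 1/6, 1/3, 1/3] : Fin 4 → ℝ) ∈ stdSimplex ℝ (Fin 4) ∧
    (∀ q ∈ stdSimplex ℝ (Fin 4),
      q ⬝ᵥ dEx.mulVec q ≤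
        (![1/6, 1/6, 1/3, 1/3] : Fin 4 → ℝ) ⬝ᵥ dEx.mulVec ![1/6, 1/6, 1/3, 1/3]) ∧
    (∀ i : Fin 4, (![1/6, 1/6, 1/3, 1/3] : Fin 4 → ℝ) i ≠ 0) ∧
    (![0, 1/2, 1/2] : Fin 3 → ℝ) ∈ stdSimplex ℝ (Fin 3) ∧
    (∀ q ∈ stdSimplex ℝ (Fin 3),
      q ⬝ᵥ dEx3.mulVec q ≤
        (![0, 1/2, 1/2] : Fin 3 → ℝ) ⬝ᵥ dEx3.mulVec ![0, 1/2, 1/2]) ∧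
    (∀ q ∈ stdSimplex ℝ (Fin 3),
      (∀ r ∈ stdSimplex ℝ (Fin 3), r ⬝ᵥ dEx3.mulVec r ≤ q ⬝ᵥ dEx3.mulVec q) →
      q 0 = 0 ∧ q 1 ≠ 0 ∧ q 2 ≠ 0) := by
  have hQp : (![1/6, 1/6, 1/3, 1/3] : Fin 4 → ℝ) ⬝ᵥ dEx.mulVec ![1/6, 1/6, 1/3, 1/3]
      = 7/6 := by rw [quad4]; norm_num [Matrix.cons_val_two, Matrix.cons_val_three, Matrix.vecHead, Matrix.vecTail]
  have hQp3 : (![0, 1/2, 1/2] : Fin 3 → ℝ) ⬝ᵥ dEx3.mulVec ![0, 1/2, 1/2] = 1 := by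
    rw [quad3]; norm_num [Matrix.cons_val_two, Matrix.cons_val_three, Matrix.vecHead, Matrix.vecTail]
  refine ⟨?_, ?_, ?_, ?_, ?_, ?_, ?_, ?_, ?_, ?_, ?_⟩
  · ext i j; fin_cases i <;> fin_cases j <;> simp [dEx, Matrix.transpose_apply]
  · intro i; fin_cases i <;> simp [dEx]
  · intro i j hij; fin_cases i <;> fin_cases j <;> first | (exact absurd rfl hij) | norm_num [dEx]
  · intro i j k; fin_cases i <;> fin_cases j <;> fin_cases k <;> norm_num [dEx]
  · intro x hx hsum
    rw [Fin.sum_univ_four] at hsum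
    have h0 : x 0 = -(x 1 + x 2 + x 3) := by linarith
    rw [quad4]
    have hne : x 1 ≠ 0 ∨ x 2 ≠ 0 ∨ x 3 ≠ 0 := by
      by_contra h
      push_neg at h
      obtain ⟨h1, h2, h3⟩ := h
      apply hx
      funext i
      fin_cases i <;> simp_all
    rw [h0]
    rcases hne with h | h | h
    · have : 0 < (x 1) ^ 2 := by positivity
      nlinarith [sq_nonneg (x 1 + x 3), sq_nonneg (2 * x 2 + x 3), sq_nonneg (x 3)]
    · have : 0 < (x 2) ^ 2 := by positivity
      nlinarith [sq_nonneg (x 1 + x 3), sq_nonneg (2 * x 2 + x 3), sq_nonneg (x 3)]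
    · have : 0 < (x 3) ^ 2 := by positivity
      nlinarith [sq_nonneg (x 1 + x 3), sq_nonneg (2 * x 2 + x 3), sq_nonneg (x 3)]
  · refine ⟨fun i => by fin_cases i <;> norm_num, ?_⟩
    rw [Fin.sum_univ_four]; norm_num [Matrix.cons_val_two, Matrix.cons_val_three, Matrix.vecHead, Matrix.vecTail]
  · intro q hq
    obtain ⟨_, hsum⟩ := hq
    rw [Fin.sum_univ_four] at hsum
    have hq0 : q 0 = 1 - q 1 - q 2 - q 3 := by linarith
    rw [quad4, hQp, hq0]
    nlinarith [sq_nonneg (q 1 - 1/6 + q 3 - 1/3), sq_nonneg (2*(q 2 - 1/3) + (q 3 - 1/3)),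
      sq_nonneg (q 3 - 1/3)]
  · intro i; fin_cases i <;> norm_num
  · refine ⟨fun i => by fin_cases i <;> norm_num, ?_⟩
    rw [Fin.sum_univ_three]; norm_num [Matrix.cons_val_two, Matrix.cons_val_three, Matrix.vecHead, Matrix.vecTail]
  · intro q hq
    obtain ⟨hpos, hsum⟩ := hq
    rw [Fin.sum_univ_three] at hsum
    rw [quad3, hQp3]
    nlinarith [sq_nonneg (q 0), sq_nonneg (q 1 - q 2)]
  · intro q hq hmax
    obtain ⟨hpos, hsum⟩ := hq
    rw [Fin.sum_univ_three] at hsum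
    have h1 : (1:ℝ) ≤ q ⬝ᵥ dEx3.mulVec q := by
      have := hmax ![0, 1/2, 1/2]
        ⟨fun i => by fin_cases i <;> norm_num, by rw [Fin.sum_univ_three]; norm_num [Matrix.cons_val_two, Matrix.cons_val_three, Matrix.vecHead, Matrix.vecTail]⟩
      rwa [hQp3] at this
    rw [quad3] at h1
    have hq0 : q 0 = 0 := by nlinarith [sq_nonneg (q 0), sq_nonneg (q 1 - q 2)]
    have hq12 : q 1 = q 2 := by nlinarith [sq_nonneg (q 0), sq_nonneg (q 1 - q 2)]
    have : q 1 = 1/2 := by linarith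
    exact ⟨hq0, by rw [this]; norm_num, by rw [← hq12, this]; norm_num⟩
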